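/- For every integer D ≥ 2, there exists ε > 0 such that for all complex numbers g_1, …, g_D with |g_i| < ε for each i, and for every integer n ≥ 0, F_{n+1}(g_1,…,g_D) = F_n(g_1,…,g_D) + ∑_{k=1}^{D} (∑_{1 ≤ i_1 < ⋯ < i_k ≤ D} g_{i_1} ⋯ g_{i_k}) F_{n+k}(g_1,…,g_D), where F_m(g_1,…,g_D) = ∑_{(p_1,…,p_D) ∈ ℕ^D} C^m_{p_1…p_D} ∏_i g_i^{p_i}. -/

import Mathlib

open Finset


/-- The complex number `Cᵐ_{p₁…p_D}`: for `m ≥ 1` this is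
`(m/(p₁+⋯+p_D+m)) · ∏_j binom(p₁+⋯+p_D+m, p_j)`; for `m = 0` it is `1` if all
`p_i = 0` and `0` otherwise. -/
noncomputable def Ccoef (D m : ℕ) (p : Fin D → ℕ) : ℂ :=
  if m = 0 then (if ∀ i, p i = 0 then 1 else 0)
  else (m : ℂ) / ((∑ i, p i : ℕ) + m) * ∏ j, ((∑ i, p i + m).choose (p j) : ℂ)

/-- `F D m g = ∑_{(p₁,…,p_D) ∈ ℕ^D} Cᵐ_{p₁…p_D} ∏_i g_iᵖⁱ`. -/
noncomputable def F (D m : ℕ) (g : Fin D → ℂ) : ℂ :=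
  ∑' p : Fin D → ℕ, Ccoef D m p * ∏ i, g i ^ p i



-- card-weighted powerset sum, part 1: single-element membership
lemma L1 {ι : Type*} [DecidableEq ι] (s : Finset ι) (a b : ι → ℂ) (i : ι) (hi : i ∈ s) :
    ∑ S ∈ s.powerset, (if i ∈ S then (∏ j ∈ S, a j) * ∏ j ∈ s \ S, b j else 0)
      = a i * ∏ j ∈ s.erase i, (a j + b j) := by
  have hins : s = insert i (s.erase i) := (Finset.insert_erase hi).symm
  have hni : i ∉ s.erase i := Finset.notMem_erase i s
  rw [hins, Finset.sum_powerset_insert hni]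
  have h1 : ∑ S ∈ (s.erase i).powerset,
      (if i ∈ S then (∏ j ∈ S, a j) * ∏ j ∈ insert i (s.erase i) \ S, b j else 0) = 0 := by
    apply Finset.sum_eq_zero
    intro S hS
    rw [if_neg]
    exact fun hiS => hni (Finset.mem_powerset.1 hS hiS)
  rw [h1, zero_add]
  have h2 : ∀ S ∈ (s.erase i).powerset,
      (if i ∈ insert i S then (∏ j ∈ insert i S, a j) * ∏ j ∈ insert i (s.erase i) \ insert i S, b j else 0)
        = a i * ((∏ j ∈ S, a j) * ∏ j ∈ (s.erase i) \ S, b j) := by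
    intro S hS
    have hiS : i ∉ S := fun h => hni (Finset.mem_powerset.1 hS h)
    rw [if_pos (Finset.mem_insert_self i S), Finset.prod_insert hiS]
    have : insert i (s.erase i) \ insert i S = (s.erase i) \ S := by
      ext x
      simp only [Finset.mem_sdiff, Finset.mem_insert]
      constructor
      · rintro ⟨hx1 | hx1, hx2⟩
        · exact absurd (Or.inl hx1) hx2
        · exact ⟨hx1, fun h => hx2 (Or.inr h)⟩
      · rintro ⟨hx1, hx2⟩
        exact ⟨Or.inr hx1, by rintro (rfl | h); exact hni hx1; exact hx2 h⟩
    rw [this]; ring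
  rw [Finset.sum_congr rfl h2, ← Finset.mul_sum, ← Finset.prod_add,
    Finset.erase_insert hni]

-- card-weighted powerset sum
lemma sumA {ι : Type*} [DecidableEq ι] (s : Finset ι) (a b : ι → ℂ) (c ν : ℂ)
    (hc : ∀ j ∈ s, a j + b j = c) :
    ∑ S ∈ s.powerset, (ν + S.card) * ((∏ j ∈ S, a j) * ∏ j ∈ s \ S, b j)
      = ν * c ^ s.card + (∑ i ∈ s, a i) * c ^ (s.card - 1) := by
  have hprod : ∑ S ∈ s.powerset, (∏ j ∈ S, a j) * ∏ j ∈ s \ S, b j = c ^ s.card := by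
    rw [← Finset.prod_add, Finset.prod_congr rfl hc, Finset.prod_const]
  have hcard : ∑ S ∈ s.powerset, (S.card : ℂ) * ((∏ j ∈ S, a j) * ∏ j ∈ s \ S, b j)
      = (∑ i ∈ s, a i) * c ^ (s.card - 1) := by
    have key : ∀ S ∈ s.powerset, (S.card : ℂ) * ((∏ j ∈ S, a j) * ∏ j ∈ s \ S, b j)
        = ∑ i ∈ s, (if i ∈ S then (∏ j ∈ S, a j) * ∏ j ∈ s \ S, b j else 0) := by
      intro S hS
      rw [Finset.sum_ite_mem, Finset.inter_comm, (Finset.inter_eq_left).2 (Finset.mem_powerset.1 hS)]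
      rw [Finset.sum_const, nsmul_eq_mul]
    rw [Finset.sum_congr rfl key, Finset.sum_comm]
    have : ∀ i ∈ s, ∑ S ∈ s.powerset, (if i ∈ S then (∏ j ∈ S, a j) * ∏ j ∈ s \ S, b j else 0)
        = a i * c ^ (s.card - 1) := by
      intro i hi
      rw [L1 s a b i hi, Finset.prod_congr rfl (fun j hj => hc j (Finset.mem_of_mem_erase hj)),
        Finset.prod_const, Finset.card_erase_of_mem hi]
    rw [Finset.sum_congr rfl this, ← Finset.sum_mul]
  calc ∑ S ∈ s.powerset, (ν + S.card) * ((∏ j ∈ S, a j) * ∏ j ∈ s \ S, b j)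
      = ν * ∑ S ∈ s.powerset, ((∏ j ∈ S, a j) * ∏ j ∈ s \ S, b j)
        + ∑ S ∈ s.powerset, (S.card : ℂ) * ((∏ j ∈ S, a j) * ∏ j ∈ s \ S, b j) := by
        rw [Finset.mul_sum, ← Finset.sum_add_distrib]
        exact Finset.sum_congr rfl (fun S _ => by ring)
    _ = ν * c ^ s.card + (∑ i ∈ s, a i) * c ^ (s.card - 1) := by rw [hprod, hcard]

lemma star (D n : ℕ) (hD : 1 ≤ D) (q : Fin D → ℕ) :
    Ccoef D (n + 1) q = ∑ S ∈ (Finset.univ : Finset (Fin D)).powerset,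
      (if ∀ i ∈ S, 1 ≤ q i then
        Ccoef D (n + S.card) (fun i => q i - if i ∈ S then 1 else 0) else 0) := by
  classical
  by_cases hq : ∀ i, q i = 0
  · have hs0 : ∑ i, q i = 0 := Finset.sum_eq_zero fun i _ => hq i
    rw [Finset.sum_eq_single ∅]
    · rw [if_pos (by simp)]
      simp only [Finset.card_empty, add_zero, Finset.notMem_empty, if_false, Nat.sub_zero]
      have h1 : Ccoef D (n + 1) q = 1 := by
        rw [Ccoef, if_neg (Nat.succ_ne_zero n)]
        have hne : ((n : ℂ) + 1) ≠ 0 := Nat.cast_add_one_ne_zero n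
        simp [hs0, hq, div_self hne]
      have h2 : Ccoef D n (fun i => q i) = 1 := by
        rcases Nat.eq_zero_or_pos n with rfl | hn
        · rw [Ccoef, if_pos rfl, if_pos hq]
        · rw [Ccoef, if_neg hn.ne']
          have hne : (n : ℂ) ≠ 0 := Nat.cast_ne_zero.2 hn.ne'
          simp [hs0, hq, div_self hne]
      rw [h1, h2]
    · intro S _ hne
      rw [if_neg]
      intro h
      obtain ⟨i, hi⟩ := Finset.nonempty_iff_ne_empty.2 hne
      have := h i hi
      rw [hq i] at this
      omega
    · intro h
      exact absurd (Finset.empty_mem_powerset _) h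
  · push_neg at hq
    obtain ⟨i₀, hi₀⟩ := hq
    have hq' : ¬∀ i, q i = 0 := fun h => hi₀ (h i₀)
    set Q := ∑ i, q i with hQdef
    have hqle : ∀ j, q j ≤ Q := fun j =>
      Finset.single_le_sum (fun i _ => Nat.zero_le _) (Finset.mem_univ j)
    have hQpos : 1 ≤ Q := le_trans (Nat.one_le_iff_ne_zero.2 hi₀) (hqle i₀)
    set N := Q + n with hNdef
    have hqleN : ∀ j, q j ≤ N := fun j => le_trans (hqle j) (Nat.le_add_right _ _)
    have hNc : (N : ℂ) = (Q : ℂ) + (n : ℂ) := by rw [hNdef]; push_cast; ring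
    have hfac : ∀ j, ((N : ℂ) + 1 - (q j : ℂ)) = ((N + 1 - q j : ℕ) : ℂ) := by
      intro j
      rw [Nat.cast_sub (le_trans (hqleN j) (Nat.le_succ N))]
      push_cast; ring
    have hfacne : ∀ j, ((N : ℂ) + 1 - (q j : ℂ)) ≠ 0 := by
      intro j
      rw [hfac]
      exact Nat.cast_ne_zero.2 (by have := hqleN j; omega)
    have hNne : (N : ℂ) ≠ 0 := Nat.cast_ne_zero.2 (by omega)
    have hN1ne : ((N : ℂ) + 1) ≠ 0 := by
      have : ((N : ℂ) + 1) = ((N + 1 : ℕ) : ℂ) := by push_cast; ring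
      rw [this]; exact Nat.cast_ne_zero.2 (by omega)
    set c : ℂ := (N : ℂ) * ∏ j, ((N : ℂ) + 1 - (q j : ℂ)) with hcdef
    have hcne : c ≠ 0 := mul_ne_zero hNne (Finset.prod_ne_zero_iff.2 fun j _ => hfacne j)
    apply mul_right_cancel₀ hcne
    set PC : ℂ := ∏ j, ((N.choose (q j) : ℕ) : ℂ) with hPCdef
    have hpow : ((N : ℂ) + 1) ^ D = ((N : ℂ) + 1) ^ (D - 1) * ((N : ℂ) + 1) := by
      rw [← pow_succ, Nat.sub_add_cancel hD]
    -- LHS * c = E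
    have hL : Ccoef D (n + 1) q * c = ((n : ℂ) + 1) * (N : ℂ) * ((N : ℂ) + 1) ^ (D - 1) * PC := by
      rw [Ccoef, if_neg (Nat.succ_ne_zero n)]
      have htop : Q + (n + 1) = N + 1 := by omega
      rw [← hQdef, htop]
      have hden : ((Q : ℕ) : ℂ) + ((n + 1 : ℕ) : ℂ) = (N : ℂ) + 1 := by
        push_cast [hNc]; ring
      have hprod : (∏ j, (((N + 1).choose (q j) : ℕ) : ℂ)) * (∏ j, ((N : ℂ) + 1 - (q j : ℂ)))
          = PC * ((N : ℂ) + 1) ^ D := by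
        rw [← Finset.prod_mul_distrib, hPCdef]
        have : ∀ j ∈ Finset.univ, (((N + 1).choose (q j) : ℕ) : ℂ) * ((N : ℂ) + 1 - (q j : ℂ))
            = ((N.choose (q j) : ℕ) : ℂ) * ((N : ℂ) + 1) := by
          intro j _
          have hnat : N.choose (q j) * (N + 1) = (N + 1).choose (q j) * (N + 1 - q j) :=
            Nat.choose_mul_succ_eq N (q j)
          have h1 : (((N + 1).choose (q j) : ℕ) : ℂ) * ((N + 1 - q j : ℕ) : ℂ)
              = ((N.choose (q j) : ℕ) : ℂ) * ((N + 1 : ℕ) : ℂ) := by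
            rw [← Nat.cast_mul, ← Nat.cast_mul, ← hnat]
          rw [hfac j, h1]
          push_cast; ring
        rw [Finset.prod_congr rfl this, Finset.prod_mul_distrib, Finset.prod_const,
          Finset.card_univ, Fintype.card_fin]
      -- now pure algebra
      push_cast at hden ⊢
      rw [hcdef]
      calc ((n : ℂ) + 1) / ((Q : ℂ) + ((n : ℂ) + 1)) * (∏ j, (((N + 1).choose (q j) : ℕ) : ℂ))
            * ((N : ℂ) * ∏ j, ((N : ℂ) + 1 - (q j : ℂ)))
          = ((n : ℂ) + 1) / ((N : ℂ) + 1) * (N : ℂ)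
            * ((∏ j, (((N + 1).choose (q j) : ℕ) : ℂ)) * (∏ j, ((N : ℂ) + 1 - (q j : ℂ)))) := by
            rw [show (Q : ℂ) + ((n : ℂ) + 1) = (N : ℂ) + 1 by rw [hNc]; ring]
            ring
        _ = ((n : ℂ) + 1) / ((N : ℂ) + 1) * (N : ℂ) * (PC * ((N : ℂ) + 1) ^ D) := by rw [hprod]
        _ = ((n : ℂ) + 1) * (N : ℂ) * ((N : ℂ) + 1) ^ (D - 1) * PC := by
            rw [hpow]
            field_simp

    -- RHS * c
    have hterm : ∀ S ∈ (Finset.univ : Finset (Fin D)).powerset,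
        (if ∀ i ∈ S, 1 ≤ q i then
          Ccoef D (n + S.card) (fun i => q i - if i ∈ S then 1 else 0) else 0) * c
        = ((n : ℂ) + (S.card : ℂ)) * ((∏ j ∈ S, (q j : ℂ)) *
            ∏ j ∈ Finset.univ \ S, ((N : ℂ) + 1 - (q j : ℂ))) * PC := by
      intro S _
      by_cases hS : ∀ i ∈ S, 1 ≤ q i
      · rw [if_pos hS]
        set q' : Fin D → ℕ := fun i => q i - if i ∈ S then 1 else 0 with hq'def
        rcases Nat.eq_zero_or_pos (n + S.card) with h0 | hpos
        · have hn0 : n = 0 := by omega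
          have hcard0 : S.card = 0 := by omega
          have hSempty : S = ∅ := Finset.card_eq_zero.1 hcard0
          rw [Ccoef, if_pos h0, if_neg]
          · simp [hn0, hSempty]
          · intro hall
            apply hq'
            intro i
            have := hall i
            simpa [hq'def, hSempty] using this
        · rw [Ccoef, if_neg hpos.ne']
          have hkey : (∑ i, q' i) + S.card = Q := by
            have h2 : ∑ i, (if i ∈ S then 1 else 0 : ℕ) = S.card := by
              rw [Finset.sum_ite_mem, Finset.univ_inter, Finset.sum_const, smul_eq_mul, mul_one]
            calc (∑ i, q' i) + S.card = ∑ i, (q' i + if i ∈ S then 1 else 0) := by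
                  rw [Finset.sum_add_distrib, h2]
              _ = ∑ i, q i := by
                  refine Finset.sum_congr rfl fun i _ => ?_
                  by_cases h : i ∈ S
                  · simp only [hq'def, if_pos h]
                    exact Nat.sub_add_cancel (hS i h)
                  · simp [hq'def, h]
              _ = Q := hQdef.symm
          have htop : (∑ i, q' i) + (n + S.card) = N := by omega
          rw [htop]
          have hden : ((∑ i, q' i : ℕ) : ℂ) + ((n + S.card : ℕ) : ℂ) = (N : ℂ) := by
            rw [← Nat.cast_add, htop]
          rw [hden]
          have hprod : (∏ j, ((N.choose (q' j) : ℕ) : ℂ)) * (∏ j, ((N : ℂ) + 1 - (q j : ℂ)))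
              = PC * ((∏ j ∈ S, (q j : ℂ)) * ∏ j ∈ Finset.univ \ S, ((N : ℂ) + 1 - (q j : ℂ))) := by
            rw [← Finset.prod_mul_distrib]
            have hj : ∀ j ∈ Finset.univ, ((N.choose (q' j) : ℕ) : ℂ) * ((N : ℂ) + 1 - (q j : ℂ))
                = ((N.choose (q j) : ℕ) : ℂ) *
                    (if j ∈ S then (q j : ℂ) else ((N : ℂ) + 1 - (q j : ℂ))) := by
              intro j _
              by_cases h : j ∈ S
              · have h1 : 1 ≤ q j := hS j h
                have hnat : N.choose (q j) * q j = N.choose (q j - 1) * (N - (q j - 1)) := by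
                  have h3 := Nat.choose_succ_right_eq N (q j - 1)
                  rwa [Nat.sub_add_cancel h1] at h3
                have hq'j : q' j = q j - 1 := by simp [hq'def, h]
                have hcast : ((N - (q j - 1) : ℕ) : ℂ) = (N : ℂ) + 1 - (q j : ℂ) := by
                  rw [Nat.cast_sub (le_trans (Nat.sub_le _ _) (hqleN j)), Nat.cast_sub h1]
                  push_cast; ring
                rw [hq'j, if_pos h, ← hcast, ← Nat.cast_mul, ← hnat, Nat.cast_mul]
              · have hq'j : q' j = q j := by simp [hq'def, h]
                rw [hq'j, if_neg h]
            rw [Finset.prod_congr rfl hj, Finset.prod_mul_distrib, hPCdef]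
            congr 1
            rw [Finset.prod_ite]
            congr 1
            · congr 1
              ext x; simp
            · congr 1
              ext x; simp
          have hmcast : ((n + S.card : ℕ) : ℂ) = (n : ℂ) + (S.card : ℂ) := by push_cast; ring
          rw [hcdef]
          calc ((n + S.card : ℕ) : ℂ) / (N : ℂ) * (∏ j, ((N.choose (q' j) : ℕ) : ℂ))
                * ((N : ℂ) * ∏ j, ((N : ℂ) + 1 - (q j : ℂ)))
              = ((n + S.card : ℕ) : ℂ) * ((∏ j, ((N.choose (q' j) : ℕ) : ℂ))
                  * (∏ j, ((N : ℂ) + 1 - (q j : ℂ)))) * ((N : ℂ) / (N : ℂ)) := by ring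
            _ = ((n : ℂ) + (S.card : ℂ)) * ((∏ j ∈ S, (q j : ℂ)) *
                  ∏ j ∈ Finset.univ \ S, ((N : ℂ) + 1 - (q j : ℂ))) * PC := by
                rw [div_self hNne, hprod, hmcast]; ring
      · rw [if_neg hS]
        push_neg at hS
        obtain ⟨i, hiS, hqi⟩ := hS
        have hz : (∏ j ∈ S, (q j : ℂ)) = 0 := by
          refine Finset.prod_eq_zero hiS ?_
          have : q i = 0 := by omega
          simp [this]
        rw [hz]; ring
    rw [hL, Finset.sum_mul, Finset.sum_congr rfl hterm, ← Finset.sum_mul,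
      sumA Finset.univ (fun j => (q j : ℂ)) (fun j => (N : ℂ) + 1 - (q j : ℂ)) ((N : ℂ) + 1)
        (n : ℂ) (fun j _ => by ring), Finset.card_univ, Fintype.card_fin]
    have hQc : (∑ i, (q i : ℂ)) = (Q : ℂ) := by rw [hQdef]; push_cast; ring
    rw [hQc, hpow, hNc]
    ring

lemma choose_le_two_pow' (n k : ℕ) : n.choose k ≤ 2 ^ n := by
  rcases le_or_gt k n with h | h
  · calc n.choose k ≤ ∑ m ∈ Finset.range (n + 1), n.choose m :=
        Finset.single_le_sum (fun _ _ => Nat.zero_le _) (Finset.mem_range.mpr (Nat.lt_succ_of_le h))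
      _ = 2 ^ n := Nat.sum_range_choose n
  · simp [Nat.choose_eq_zero_of_lt h]

lemma summable_pi_prod : ∀ (D : ℕ) (r : Fin D → ℝ), (∀ i, 0 ≤ r i) → (∀ i, r i < 1) →
    Summable (fun p : Fin D → ℕ => ∏ i, r i ^ p i) := by
  intro D
  induction D with
  | zero =>
    intro r _ _
    exact Summable.of_finite
  | succ d ih =>
    intro r h0 h1
    have hgeo : Summable (fun k : ℕ => r 0 ^ k) := summable_geometric_of_lt_one (h0 0) (h1 0)
    have htail := ih (fun i => r i.succ) (fun i => h0 _) (fun i => h1 _)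
    have hmul := hgeo.mul_of_nonneg htail (fun k => pow_nonneg (h0 0) k)
      (fun p => Finset.prod_nonneg fun i _ => pow_nonneg (h0 _) _)
    set e : (ℕ × (Fin d → ℕ)) ≃ (Fin (d + 1) → ℕ) := Fin.consEquiv (fun _ => ℕ) with he
    apply (e.summable_iff (f := fun p : Fin (d + 1) → ℕ => ∏ i, r i ^ p i)).1
    have hfe : ((fun p : Fin (d + 1) → ℕ => ∏ i, r i ^ p i) ∘ e)
        = fun x : ℕ × (Fin d → ℕ) => r 0 ^ x.1 * ∏ i : Fin d, (r i.succ) ^ (x.2 i) := by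
      funext x
      simp only [Function.comp_apply, he, Fin.consEquiv_apply]
      rw [Fin.prod_univ_succ]
      simp
    rw [hfe]
    exact hmul

lemma summable_main (D m : ℕ) (g : Fin D → ℂ) (hg : ∀ i, ‖g i‖ < 1 / 2 ^ (D + 1)) :
    Summable (fun p : Fin D → ℕ => Ccoef D m p * ∏ i, g i ^ p i) := by
  apply Summable.of_norm
  set r : Fin D → ℝ := fun i => 2 ^ D * ‖g i‖ with hr
  have hr0 : ∀ i, 0 ≤ r i := fun i => by positivity
  have hr1 : ∀ i, r i < 1 := by
    intro i
    have h2 : (0 : ℝ) < 2 ^ D := by positivity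
    calc r i < 2 ^ D * (1 / 2 ^ (D + 1)) := mul_lt_mul_of_pos_left (hg i) h2
      _ = 1 / 2 := by rw [pow_succ]; field_simp
      _ < 1 := by norm_num
  have hbound : ∀ p : Fin D → ℕ, ‖Ccoef D m p * ∏ i, g i ^ p i‖
      ≤ 2 ^ (D * m) * ∏ i, r i ^ p i := by
    intro p
    set P := ∑ i, p i with hP
    have hC : ‖Ccoef D m p‖ ≤ 2 ^ (D * (P + m)) := by
      rcases Nat.eq_zero_or_pos m with rfl | hm
      · rw [Ccoef, if_pos rfl]
        split
        · simp only [norm_one]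
          exact one_le_pow₀ (by norm_num)
        · simp only [norm_zero]
          positivity
      · rw [Ccoef, if_neg hm.ne']
        rw [norm_mul]
        have h1 : ‖(m : ℂ) / (((P : ℕ) : ℂ) + (m : ℂ))‖ ≤ 1 := by
          rw [norm_div]
          have hden : ((P : ℕ) : ℂ) + (m : ℂ) = ((P + m : ℕ) : ℂ) := by push_cast; ring
          rw [hden, Complex.norm_natCast, Complex.norm_natCast]
          rw [div_le_one (by exact_mod_cast Nat.lt_of_lt_of_le hm (Nat.le_add_left m P))]
          exact_mod_cast Nat.le_add_left m P
        have h2 : ‖∏ j, (((P + m).choose (p j) : ℕ) : ℂ)‖ ≤ 2 ^ (D * (P + m)) := by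
          rw [norm_prod]
          calc ∏ j, ‖(((P + m).choose (p j) : ℕ) : ℂ)‖
              ≤ ∏ _j : Fin D, ((2 : ℝ) ^ (P + m)) := by
                apply Finset.prod_le_prod (fun j _ => norm_nonneg _)
                intro j _
                rw [Complex.norm_natCast]
                exact_mod_cast choose_le_two_pow' (P + m) (p j)
            _ = ((2 : ℝ) ^ (P + m)) ^ D := by
                rw [Finset.prod_const, Finset.card_univ, Fintype.card_fin]
            _ = 2 ^ (D * (P + m)) := by rw [← pow_mul, Nat.mul_comm]
        calc ‖(m : ℂ) / (((P : ℕ) : ℂ) + (m : ℂ))‖ * ‖∏ j, (((P + m).choose (p j) : ℕ) : ℂ)‖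
            ≤ 1 * (2 ^ (D * (P + m))) :=
              mul_le_mul h1 h2 (norm_nonneg _) (by norm_num)
          _ = 2 ^ (D * (P + m)) := one_mul _
    calc ‖Ccoef D m p * ∏ i, g i ^ p i‖ = ‖Ccoef D m p‖ * ∏ i, ‖g i‖ ^ p i := by
          rw [norm_mul, norm_prod]
          simp [norm_pow]
      _ ≤ 2 ^ (D * (P + m)) * ∏ i, ‖g i‖ ^ p i :=
          mul_le_mul_of_nonneg_right hC (Finset.prod_nonneg fun i _ => by positivity)
      _ = 2 ^ (D * m) * ∏ i, r i ^ p i := by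
          have hsplit : (2 : ℝ) ^ (D * (P + m)) = 2 ^ (D * m) * ((2 : ℝ) ^ D) ^ P := by
            rw [← pow_mul, ← pow_add]
            congr 1
            ring
          rw [hsplit, mul_assoc]
          congr 1
          calc ((2 : ℝ) ^ D) ^ P * ∏ i, ‖g i‖ ^ p i
              = (∏ i, ((2 : ℝ) ^ D) ^ p i) * ∏ i, ‖g i‖ ^ p i := by
                rw [Finset.prod_pow_eq_pow_sum]
            _ = ∏ i, ((2 : ℝ) ^ D * ‖g i‖) ^ p i := by
                rw [← Finset.prod_mul_distrib]
                exact Finset.prod_congr rfl fun i _ => (mul_pow _ _ _).symm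
            _ = ∏ i, r i ^ p i := rfl
  exact Summable.of_nonneg_of_le (fun p => norm_nonneg _) hbound
    ((summable_pi_prod D r hr0 hr1).mul_left _)

/-- shift map `p ↦ p + 1_S` -/
def efun {D : ℕ} (S : Finset (Fin D)) (p : Fin D → ℕ) : Fin D → ℕ :=
  fun i => p i + if i ∈ S then 1 else 0

/-- the reindexed summand -/
noncomputable def Gfun (D n : ℕ) (g : Fin D → ℂ) (S : Finset (Fin D)) (q : Fin D → ℕ) : ℂ :=
  (if ∀ i ∈ S, 1 ≤ q i then
    Ccoef D (n + S.card) (fun i => q i - if i ∈ S then 1 else 0) else 0) * ∏ i, g i ^ q i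

lemma efun_inj {D : ℕ} (S : Finset (Fin D)) : Function.Injective (efun S) := by
  intro p p' h
  funext i
  have h2 := congrFun h i
  simp only [efun] at h2
  omega

lemma Gfun_efun (D n : ℕ) (g : Fin D → ℂ) (S : Finset (Fin D)) (p : Fin D → ℕ) :
    Gfun D n g S (efun S p) = (∏ i ∈ S, g i) * (Ccoef D (n + S.card) p * ∏ i, g i ^ p i) := by
  have hcond : ∀ i ∈ S, 1 ≤ efun S p i := by
    intro i hi; simp only [efun, if_pos hi]; omega
  have harg : (fun i => efun S p i - if i ∈ S then 1 else 0) = p := by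
    funext i; simp only [efun]; omega
  rw [Gfun, if_pos hcond, harg]
  have hprod : ∏ i, g i ^ (efun S p i) = (∏ i, g i ^ p i) * ∏ i ∈ S, g i := by
    calc ∏ i, g i ^ (efun S p i) = ∏ i, (g i ^ p i * (if i ∈ S then g i else 1)) := by
          refine Finset.prod_congr rfl fun i _ => ?_
          simp only [efun]
          by_cases h : i ∈ S <;> simp [h, pow_succ]
      _ = (∏ i, g i ^ p i) * ∏ i, (if i ∈ S then g i else 1) := Finset.prod_mul_distrib
      _ = (∏ i, g i ^ p i) * ∏ i ∈ S, g i := by rw [Finset.prod_ite_mem, Finset.univ_inter]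
  rw [hprod]
  ring

lemma Gfun_supp (D n : ℕ) (g : Fin D → ℂ) (S : Finset (Fin D)) :
    ∀ q ∉ Set.range (efun S), Gfun D n g S q = 0 := by
  intro q hq
  rw [Gfun, if_neg, zero_mul]
  intro hcond
  refine hq ⟨fun i => q i - if i ∈ S then 1 else 0, ?_⟩
  funext i
  simp only [efun]
  by_cases h : i ∈ S
  · have := hcond i h
    simp only [if_pos h]
    omega
  · simp [h]

theorem Fn_linear_recursion (D : ℕ) (hD : 2 ≤ D) :
    ∃ ε > 0, ∀ g : Fin D → ℂ, (∀ i, ‖g i‖ < ε) → ∀ n : ℕ,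
      F D (n + 1) g = F D n g +
        ∑ k ∈ Finset.Icc 1 D,
          (∑ S ∈ Finset.powersetCard k (Finset.univ : Finset (Fin D)), ∏ i ∈ S, g i) *
            F D (n + k) g := by
  classical
  refine ⟨1 / 2 ^ (D + 1), by positivity, fun g hg n => ?_⟩
  have hsum : ∀ m, Summable (fun p : Fin D → ℕ => Ccoef D m p * ∏ i, g i ^ p i) :=
    fun m => summable_main D m g hg
  have hGsummable : ∀ S : Finset (Fin D), Summable (Gfun D n g S) := by
    intro S
    apply ((efun_inj S).summable_iff (Gfun_supp D n g S)).1
    have hcomp : (Gfun D n g S ∘ efun S)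
        = fun p => (∏ i ∈ S, g i) * (Ccoef D (n + S.card) p * ∏ i, g i ^ p i) :=
      funext fun p => Gfun_efun D n g S p
    rw [hcomp]
    exact (hsum (n + S.card)).mul_left _
  have hB : ∀ S : Finset (Fin D),
      (∏ i ∈ S, g i) * F D (n + S.card) g = ∑' q, Gfun D n g S q := by
    intro S
    calc (∏ i ∈ S, g i) * F D (n + S.card) g
        = ∑' p, (∏ i ∈ S, g i) * (Ccoef D (n + S.card) p * ∏ i, g i ^ p i) := by
          rw [F, tsum_mul_left]
      _ = ∑' p, Gfun D n g S (efun S p) := tsum_congr fun p => (Gfun_efun D n g S p).symm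
      _ = ∑' q, Gfun D n g S q :=
          (efun_inj S).tsum_eq (Function.support_subset_iff'.2 (Gfun_supp D n g S))
  have hstepA : F D n g + ∑ k ∈ Finset.Icc 1 D,
      (∑ S ∈ Finset.powersetCard k (Finset.univ : Finset (Fin D)), ∏ i ∈ S, g i) * F D (n + k) g
      = ∑ S ∈ (Finset.univ : Finset (Fin D)).powerset, (∏ i ∈ S, g i) * F D (n + S.card) g := by
    have hj : ∀ j : ℕ, ∑ S ∈ Finset.powersetCard j (Finset.univ : Finset (Fin D)),
        (∏ i ∈ S, g i) * F D (n + S.card) g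
        = (∑ S ∈ Finset.powersetCard j (Finset.univ : Finset (Fin D)), ∏ i ∈ S, g i)
            * F D (n + j) g := by
      intro j
      rw [Finset.sum_mul]
      exact Finset.sum_congr rfl fun S hS => by rw [(Finset.mem_powersetCard.1 hS).2]
    calc F D n g + ∑ k ∈ Finset.Icc 1 D,
        (∑ S ∈ Finset.powersetCard k (Finset.univ : Finset (Fin D)), ∏ i ∈ S, g i)
          * F D (n + k) g
        = ∑ j ∈ Finset.range (D + 1),
            (∑ S ∈ Finset.powersetCard j (Finset.univ : Finset (Fin D)), ∏ i ∈ S, g i)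
              * F D (n + j) g := by
          rw [Finset.range_eq_Ico, Finset.sum_eq_sum_Ico_succ_bot (Nat.succ_pos D),
            Nat.succ_eq_add_one, Finset.Ico_add_one_right_eq_Icc]
          congr 1
          simp
      _ = ∑ j ∈ Finset.range (D + 1), ∑ S ∈ Finset.powersetCard j (Finset.univ : Finset (Fin D)),
            (∏ i ∈ S, g i) * F D (n + S.card) g :=
          Finset.sum_congr rfl fun j _ => (hj j).symm
      _ = ∑ S ∈ (Finset.univ : Finset (Fin D)).powerset, (∏ i ∈ S, g i) * F D (n + S.card) g := by
          rw [Finset.sum_powerset, Finset.card_univ, Fintype.card_fin]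
  calc F D (n + 1) g = ∑' q : Fin D → ℕ, Ccoef D (n + 1) q * ∏ i, g i ^ q i := rfl
    _ = ∑' q, ∑ S ∈ (Finset.univ : Finset (Fin D)).powerset, Gfun D n g S q := by
        refine tsum_congr fun q => ?_
        rw [star D n (by omega) q, Finset.sum_mul]
        exact Finset.sum_congr rfl fun S _ => rfl
    _ = ∑ S ∈ (Finset.univ : Finset (Fin D)).powerset, ∑' q, Gfun D n g S q :=
        Summable.tsum_finsetSum fun S _ => hGsummable S
    _ = ∑ S ∈ (Finset.univ : Finset (Fin D)).powerset, (∏ i ∈ S, g i) * F D (n + S.card) g :=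
        Finset.sum_congr rfl fun S _ => (hB S).symm
    _ = F D n g + ∑ k ∈ Finset.Icc 1 D,
          (∑ S ∈ Finset.powersetCard k (Finset.univ : Finset (Fin D)), ∏ i ∈ S, g i)
            * F D (n + k) g := hstepA.symm
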